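/- Let γ > 0, τ > 0 and c ∈ ℝ with |c| < γ. Then every λ ∈ ℂ satisfying λ + γ = c·exp(−λτ) has Re λ < 0. -/

import Mathlib

/-- For `γ, τ > 0` and `|c| < γ`, every complex root of the
characteristic equation `λ + γ = c e^{-λτ}` has negative real part. -/
theorem constant_delay_char_roots_neg_re
    (γ τ c : ℝ) (hγ : 0 < γ) (hτ : 0 < τ) (hc : |c| < γ) :
    ∀ lam : ℂ, lam + (γ : ℂ) = (c : ℂ) * Complex.exp (-lam * (τ : ℂ)) → lam.re < 0 := by
  intro lam heq
  by_contra h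
  push_neg at h
  have h1 : γ ≤ ‖lam + (γ : ℂ)‖ := by
    calc γ ≤ (lam + (γ : ℂ)).re := by simp; linarith
    _ ≤ ‖lam + (γ : ℂ)‖ := Complex.re_le_norm _
  have h2 : ‖(c : ℂ) * Complex.exp (-lam * (τ : ℂ))‖ ≤ |c| := by
    rw [norm_mul, Complex.norm_exp]
    have : (-lam * (τ : ℂ)).re = -lam.re * τ := by simp
    rw [this]
    have : Real.exp (-lam.re * τ) ≤ 1 := by
      apply Real.exp_le_one_iff.mpr
      nlinarith
    calc ‖(c : ℂ)‖ * Real.exp (-lam.re * τ)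
        ≤ ‖(c : ℂ)‖ * 1 := by
          apply mul_le_mul_of_nonneg_left this (by positivity)
      _ = |c| := by simp
  rw [heq] at h1
  linarith
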